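/- Let X be a compact ultrametric space and let 0 < s < dimH X, where dimH denotes Hausdorff dimension. Then there exist an integer k ≥ 2 and a real q > 1 with log k / log q ≥ s, a constant c > 0, and a map φ : Y(k,q) → X such that d_X(φ(a), φ(b)) ≥ c·d_{Y(k,q)}(a,b) for all a, b ∈ Y(k,q); that is, X contains a co-Lipschitz image of a regular ultrametric space of Hausdorff dimension at least s. -/

import Mathlib

open scoped ENNReal NNReal Classical
open Metric MeasureTheory Set

section Aux

variable {X : Type*} [MetricSpace X]

/-- Hausdorff `t`-content as an outer measure. -/
noncomputable def hcont (t : ℝ) (ht : 0 < t) : MeasureTheory.OuterMeasure X :=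
  MeasureTheory.OuterMeasure.ofFunction (fun E : Set X => EMetric.diam E ^ t)
    (by rw [show EMetric.diam (∅ : Set X) = 0 from Metric.ediam_empty]; exact ENNReal.zero_rpow_of_pos ht)

theorem hcont_le_diam {t : ℝ} (ht : 0 < t) (E : Set X) : hcont t ht E ≤ EMetric.diam E ^ t :=
  MeasureTheory.OuterMeasure.ofFunction_le _

theorem hcont_ne_top [CompactSpace X] {t : ℝ} (ht : 0 < t) (E : Set X) :
    hcont t ht E ≠ ⊤ := by
  refine ne_top_of_le_ne_top ?_ (hcont_le_diam ht E)
  exact (ENNReal.rpow_lt_top_of_nonneg ht.le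
    (ne_top_of_le_ne_top (isCompact_univ.isBounded).ediam_ne_top
      (EMetric.diam_mono (subset_univ E)))).ne

theorem hausdorffMeasure_eq_zero_of_hcont {t : ℝ} (ht : 0 < t) {E : Set X}
    [MeasurableSpace X] [BorelSpace X]
    (h : hcont t ht E = 0) : μH[t] E = 0 := by
  rw [MeasureTheory.Measure.hausdorffMeasure_apply]
  refine le_antisymm ?_ zero_le
  refine iSup₂_le fun r hr => ?_
  refine ENNReal.le_of_forall_pos_le_add fun ε hε _ => ?_
  rw [zero_add]
  have hrt : (0 : ℝ≥0∞) < r ^ t := by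
    rcases eq_or_ne r ⊤ with rfl | hr'
    · simp [ENNReal.top_rpow_of_pos ht]
    · exact ENNReal.rpow_pos hr hr'
  have hδ : (0 : ℝ≥0∞) < min (ε : ℝ≥0∞) (r ^ t) := lt_min (by exact_mod_cast hε) hrt
  have h2 : hcont t ht E < min (ε : ℝ≥0∞) (r ^ t) := h ▸ hδ
  rw [hcont, MeasureTheory.OuterMeasure.ofFunction_apply] at h2
  rw [iInf_lt_iff] at h2
  obtain ⟨U, hU⟩ := h2
  rw [iInf_lt_iff] at hU
  obtain ⟨hUc, hU⟩ := hU
  have hdiam : ∀ n, EMetric.diam (U n) ≤ r := by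
    intro n
    by_contra hn
    push_neg at hn
    have : r ^ t ≤ EMetric.diam (U n) ^ t := ENNReal.rpow_le_rpow hn.le ht.le
    have : r ^ t ≤ ∑' n, EMetric.diam (U n) ^ t := this.trans (ENNReal.le_tsum n)
    exact absurd (this.trans_lt (hU.trans_le (min_le_right _ _))) (lt_irrefl _)
  calc (⨅ (U : ℕ → Set X) (_ : E ⊆ ⋃ n, U n) (_ : ∀ n, EMetric.diam (U n) ≤ r),
        ∑' n, ⨆ _ : (U n).Nonempty, EMetric.diam (U n) ^ t)
      ≤ ∑' n, ⨆ _ : (U n).Nonempty, EMetric.diam (U n) ^ t :=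
        iInf₂_le_of_le U hUc (iInf_le_of_le hdiam le_rfl)
    _ ≤ ∑' n, EMetric.diam (U n) ^ t :=
        ENNReal.tsum_le_tsum fun n => iSup_le fun _ => le_rfl
    _ ≤ (ε : ℝ≥0∞) := (hU.trans_le (min_le_left _ _)).le

theorem ultra_diam_closedBall [IsUltrametricDist X] (x : X) {r : ℝ} (hr : 0 ≤ r) :
    EMetric.diam (closedBall x r) ≤ ENNReal.ofReal r := by
  refine EMetric.diam_le fun y hy z hz => ?_
  rw [edist_dist]
  refine ENNReal.ofReal_le_ofReal ?_
  calc dist y z ≤ max (dist y x) (dist x z) := IsUltrametricDist.dist_triangle_max y x z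
    _ ≤ r := max_le (mem_closedBall.mp hy) (by rw [dist_comm]; exact mem_closedBall.mp hz)

theorem ultra_sep [IsUltrametricDist X] {x x' y z : X} {r : ℝ}
    (hne : closedBall x r ≠ closedBall x' r) (hy : y ∈ closedBall x r) (hz : z ∈ closedBall x' r) :
    r < dist y z := by
  by_contra hle
  push_neg at hle
  have h1 : closedBall x r = closedBall y r := IsUltrametricDist.closedBall_eq_of_mem hy
  have h2 : closedBall x' r = closedBall z r := IsUltrametricDist.closedBall_eq_of_mem hz
  have hzy : z ∈ closedBall y r := by rwa [mem_closedBall, dist_comm]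
  have h3 := IsUltrametricDist.closedBall_eq_of_mem hzy
  exact hne (h1.trans (h3.trans h2.symm))

theorem finite_ball_cover [CompactSpace X] {r : ℝ} (hr : 0 < r) :
    ∃ Z : Finset X, (Set.univ : Set X) ⊆ ⋃ z ∈ Z, closedBall z r := by
  obtain ⟨Z, hZsub, hZfin, hZ⟩ :=
    finite_cover_balls_of_compact (isCompact_univ : IsCompact (Set.univ : Set X)) hr
  refine ⟨hZfin.toFinset, fun x hx => ?_⟩
  have h2 := hZ hx
  simp only [mem_iUnion, exists_prop] at h2 ⊢
  obtain ⟨z, hz, hxz⟩ := h2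
  exact ⟨z, by simpa using hz, ball_subset_closedBall hxz⟩

def listUnion (L : List (Set X)) : Set X := L.foldr (· ∪ ·) ∅

theorem mem_listUnion {x : X} {L : List (Set X)} : x ∈ listUnion L ↔ ∃ C ∈ L, x ∈ C := by
  induction L with
  | nil => simp [listUnion]
  | cons C L ih =>
      show x ∈ C ∪ listUnion L ↔ _
      rw [Set.mem_union, ih]
      simp

theorem listUnion_append (P Q : List (Set X)) :
    listUnion (P ++ Q) = listUnion P ∪ listUnion Q := by
  induction P with
  | nil => simp [listUnion]
  | cons C P ih =>
      show C ∪ listUnion (P ++ Q) = (C ∪ listUnion P) ∪ listUnion Q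
      rw [ih]; ac_rfl

theorem extract_lemma (μ : OuterMeasure X) (E : Set X) (ε : ℝ≥0∞) :
    ∀ (L : List (Set X)) (S : Set X), (∀ C ∈ L, μ (E ∩ C) ≤ ε) → μ (E ∩ S) < ε →
      ε ≤ μ (E ∩ (S ∪ listUnion L)) →
      ∃ P Q : List (Set X), L = P ++ Q ∧ ε ≤ μ (E ∩ (S ∪ listUnion P)) ∧
        μ (E ∩ (S ∪ listUnion P)) ≤ 2 * ε := by
  intro L
  induction L with
  | nil =>
    intro S hC hlt hge
    simp only [listUnion, List.foldr_nil, Set.union_empty] at hge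
    exact absurd hge (not_le.mpr hlt)
  | cons C L ih =>
    intro S hC hlt hge
    have hsub : μ (E ∩ (S ∪ C)) ≤ μ (E ∩ S) + μ (E ∩ C) := by
      rw [Set.inter_union_distrib_left]
      exact measure_union_le _ _
    by_cases hc : ε ≤ μ (E ∩ (S ∪ C))
    · refine ⟨[C], L, rfl, ?_, ?_⟩
      · simpa [listUnion, Set.union_empty] using hc
      · have : μ (E ∩ (S ∪ C)) ≤ 2 * ε := by
          calc μ (E ∩ (S ∪ C)) ≤ μ (E ∩ S) + μ (E ∩ C) := hsub
            _ ≤ ε + ε := add_le_add hlt.le (hC C List.mem_cons_self)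
            _ = 2 * ε := (two_mul ε).symm
        simpa [listUnion, Set.union_empty] using this
    · push_neg at hc
      have hge' : ε ≤ μ (E ∩ ((S ∪ C) ∪ listUnion L)) := by
        have : (S ∪ C) ∪ listUnion L = S ∪ listUnion (C :: L) := by
          simp only [listUnion, List.foldr]; ac_rfl
        rwa [this]
      obtain ⟨P, Q, hPQ, h1, h2⟩ := ih (S ∪ C) (fun D hD => hC D (List.mem_cons_of_mem _ hD)) hc hge'
      have heq : S ∪ listUnion (C :: P) = (S ∪ C) ∪ listUnion P := by
        simp only [listUnion, List.foldr]; ac_rfl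
      exact ⟨C :: P, Q, by rw [hPQ]; rfl, by rwa [heq], by rwa [heq]⟩

theorem group_lemma (μ : OuterMeasure X) (E : Set X) (ε : ℝ≥0∞) (hε0 : ε ≠ 0) (hεtop : ε ≠ ∞) :
    ∀ (j : ℕ) (L : List (Set X)), L.Nodup → (∀ C ∈ L, μ (E ∩ C) ≤ ε) →
      ((2 * j : ℕ) : ℝ≥0∞) * ε ≤ μ (E ∩ listUnion L) →
      ∃ G : Fin j → List (Set X), (∀ i, ∀ C ∈ G i, C ∈ L) ∧
        (∀ i i', i ≠ i' → ∀ C, C ∈ G i → C ∉ G i') ∧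
        (∀ i, ε ≤ μ (E ∩ listUnion (G i))) := by
  intro j
  induction j with
  | zero => intro L _ _ _; exact ⟨Fin.elim0, by simp, by simp, by simp⟩
  | succ j ih =>
    intro L hnd hC htot
    have hlt0 : μ (E ∩ (∅ : Set X)) < ε := by
      simp only [Set.inter_empty, measure_empty]
      exact pos_iff_ne_zero.mpr hε0
    have hεle : ε ≤ μ (E ∩ listUnion L) := by
      refine le_trans ?_ htot
      calc ε = 1 * ε := (one_mul ε).symm
        _ ≤ ((2 * (j+1) : ℕ) : ℝ≥0∞) * ε := by
            refine mul_le_mul_of_nonneg_right ?_ zero_le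
            exact_mod_cast Nat.one_le_iff_ne_zero.mpr (by omega)
    obtain ⟨P, Q, hPQ, h1, h2⟩ := extract_lemma μ E ε L ∅ hC hlt0
      (by rwa [Set.empty_union])
    rw [Set.empty_union] at h1 h2
    have hQ : ((2 * j : ℕ) : ℝ≥0∞) * ε ≤ μ (E ∩ listUnion Q) := by
      have hsplit : μ (E ∩ listUnion L) ≤ μ (E ∩ listUnion P) + μ (E ∩ listUnion Q) := by
        rw [hPQ, listUnion_append, Set.inter_union_distrib_left]
        exact measure_union_le _ _
      have key : ((2 * j : ℕ) : ℝ≥0∞) * ε + 2 * ε ≤ μ (E ∩ listUnion Q) + 2 * ε := by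
        calc ((2 * j : ℕ) : ℝ≥0∞) * ε + 2 * ε = ((2 * (j+1) : ℕ) : ℝ≥0∞) * ε := by
              push_cast; ring
          _ ≤ μ (E ∩ listUnion L) := htot
          _ ≤ μ (E ∩ listUnion P) + μ (E ∩ listUnion Q) := hsplit
          _ ≤ 2 * ε + μ (E ∩ listUnion Q) := add_le_add h2 le_rfl
          _ = μ (E ∩ listUnion Q) + 2 * ε := add_comm _ _
      exact ENNReal.le_of_add_le_add_right
        (by exact ENNReal.mul_ne_top (by norm_num) hεtop) key
    have hndQ : Q.Nodup := List.Nodup.of_append_right (hPQ ▸ hnd)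
    have disj : P.Disjoint Q := List.disjoint_of_nodup_append (hPQ ▸ hnd)
    obtain ⟨G', hG1, hG2, hG3⟩ := ih Q hndQ
      (fun C hCQ => hC C (hPQ ▸ List.mem_append_right P hCQ)) hQ
    have hPnotQ : ∀ C ∈ P, ∀ i, C ∉ G' i := fun C hCP i hCG => disj hCP (hG1 i C hCG)
    refine ⟨fun i => if h : i = 0 then P else G' (i.pred h), ?_, ?_, ?_⟩
    · intro i C hCi
      by_cases h : i = 0
      · simp only [dif_pos h] at hCi
        exact hPQ ▸ List.mem_append_left Q hCi
      · simp only [dif_neg h] at hCi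
        exact hPQ ▸ List.mem_append_right P (hG1 _ C hCi)
    · intro i i' hne C hCi hCi'
      by_cases h : i = 0 <;> by_cases h' : i' = 0
      · exact hne (h.trans h'.symm)
      · simp only [dif_pos h] at hCi
        simp only [dif_neg h'] at hCi'
        exact hPnotQ C hCi _ hCi'
      · simp only [dif_neg h] at hCi
        simp only [dif_pos h'] at hCi'
        exact hPnotQ C hCi' _ hCi
      · simp only [dif_neg h] at hCi
        simp only [dif_neg h'] at hCi'
        refine hG2 _ _ (fun heq => hne ?_) C hCi hCi'
        have := congrArg (Fin.succ) heq
        rwa [Fin.succ_pred, Fin.succ_pred] at this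
    · intro i
      by_cases h : i = 0
      · simp only [dif_pos h]; exact h1
      · simp only [dif_neg h]; exact hG3 _

theorem split_lemma [CompactSpace X] [IsUltrametricDist X]
    {t : ℝ} (ht : 0 < t) {k : ℕ} (hk : 2 ≤ k) (E : Set X) (hE : hcont t ht E ≠ 0) :
    ∃ D : Fin k → Set X, (∀ i, D i ⊆ E) ∧
      (∀ i, hcont t ht E / ((2 * k : ℕ) : ℝ≥0∞) ≤ hcont t ht (D i)) ∧
      (∀ i i', i ≠ i' → ∀ x ∈ D i, ∀ y ∈ D i',
        ((hcont t ht E / ((2 * k : ℕ) : ℝ≥0∞)) ^ (1/t)).toReal < dist x y) := by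
  set μ := hcont (X := X) t ht with hμ
  have htop : μ E ≠ ⊤ := hcont_ne_top ht E
  have h2k0 : ((2 * k : ℕ) : ℝ≥0∞) ≠ 0 := by
    simp only [ne_eq, Nat.cast_eq_zero]; omega
  have h2ktop : ((2 * k : ℕ) : ℝ≥0∞) ≠ ⊤ := ENNReal.natCast_ne_top _
  set ε := μ E / ((2 * k : ℕ) : ℝ≥0∞) with hεdef
  have hε0 : ε ≠ 0 := (ENNReal.div_pos hE h2ktop).ne'
  have hεtop : ε ≠ ⊤ := (ENNReal.div_lt_top htop h2k0).ne
  set r : ℝ := (ε ^ (1/t)).toReal with hrdef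
  have hεr0 : (0:ℝ≥0∞) < ε ^ (1/t) := ENNReal.rpow_pos (pos_iff_ne_zero.mpr hε0) hεtop
  have hεrtop : ε ^ (1/t) ≠ ⊤ :=
    (ENNReal.rpow_lt_top_of_nonneg (by positivity) hεtop).ne
  have hr : 0 < r := ENNReal.toReal_pos hεr0.ne' hεrtop
  have hofr : ENNReal.ofReal r = ε ^ (1/t) := ENNReal.ofReal_toReal hεrtop
  have hball : ∀ z : X, μ (E ∩ closedBall z r) ≤ ε := by
    intro z
    calc μ (E ∩ closedBall z r) ≤ μ (closedBall z r) := measure_mono inter_subset_right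
      _ ≤ EMetric.diam (closedBall z r) ^ t := hcont_le_diam ht _
      _ ≤ (ENNReal.ofReal r) ^ t :=
          ENNReal.rpow_le_rpow (ultra_diam_closedBall z hr.le) ht.le
      _ = ε := by
          rw [hofr, ← ENNReal.rpow_mul, one_div_mul_cancel ht.ne', ENNReal.rpow_one]
  obtain ⟨Z, hZ⟩ := finite_ball_cover (X := X) hr
  set L : List (Set X) := (Z.image (fun z => closedBall z r)).toList with hL
  have hLnd : L.Nodup := Finset.nodup_toList _
  have hLball : ∀ C ∈ L, ∃ z : X, C = closedBall z r := by
    intro C hC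
    rw [hL, Finset.mem_toList, Finset.mem_image] at hC
    obtain ⟨z, _, rfl⟩ := hC
    exact ⟨z, rfl⟩
  have hC : ∀ C ∈ L, μ (E ∩ C) ≤ ε := by
    intro C hCL
    obtain ⟨z, rfl⟩ := hLball C hCL
    exact hball z
  have hcov : E ∩ listUnion L = E := by
    refine inter_eq_self_of_subset_left fun x hx => ?_
    have := hZ (mem_univ x)
    simp only [mem_iUnion, exists_prop] at this
    obtain ⟨z, hz, hxz⟩ := this
    exact mem_listUnion.mpr ⟨closedBall z r, by
      rw [hL, Finset.mem_toList, Finset.mem_image]; exact ⟨z, hz, rfl⟩, hxz⟩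
  have htot : ((2 * k : ℕ) : ℝ≥0∞) * ε ≤ μ (E ∩ listUnion L) := by
    rw [hcov, hεdef, mul_comm, ENNReal.div_mul_cancel h2k0 h2ktop]
  obtain ⟨G, hG1, hG2, hG3⟩ := group_lemma μ E ε hε0 hεtop k L hLnd hC htot
  refine ⟨fun i => E ∩ listUnion (G i), fun i => inter_subset_left, fun i => hG3 i, ?_⟩
  intro i i' hne x hx y hy
  obtain ⟨Cx, hCx, hxCx⟩ := mem_listUnion.mp hx.2
  obtain ⟨Cy, hCy, hyCy⟩ := mem_listUnion.mp hy.2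
  obtain ⟨zx, rfl⟩ := hLball Cx (hG1 i Cx hCx)
  obtain ⟨zy, rfl⟩ := hLball Cy (hG1 i' Cy hCy)
  have hneC : closedBall zx r ≠ closedBall zy r := by
    intro heq
    exact hG2 i i' hne _ hCx (heq ▸ hCy)
  exact ultra_sep hneC hxCx hyCy

theorem aux_pow {M t : ℝ} (hM : 0 < M) (ht : 0 < t) (n : ℕ) :
    ((M⁻¹ : ℝ) ^ (n + 1)) ^ (1 / t) = (M ^ (1 / t)) ^ (-((n : ℤ) + 1)) := by
  have h1 : ((M⁻¹ : ℝ) ^ (n + 1)) ^ (1 / t) = ((M ^ (n + 1) : ℝ) ^ (1 / t))⁻¹ := by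
    rw [inv_pow, Real.inv_rpow (by positivity)]
  have h2 : ((M ^ (n + 1) : ℝ)) ^ (1 / t) = (M ^ (1 / t)) ^ (n + 1) := by
    rw [← Real.rpow_natCast M (n + 1), ← Real.rpow_mul hM.le,
      ← Real.rpow_natCast (M ^ (1 / t)) (n + 1), ← Real.rpow_mul hM.le, mul_comm]
  have h3 : (M ^ (1 / t)) ^ (-((n : ℤ) + 1)) = ((M ^ (1 / t)) ^ (n + 1))⁻¹ := by
    rw [zpow_neg]
    norm_cast
  rw [h1, h2, h3]

theorem choose_k {s t : ℝ} (hs : 0 < s) (hst : s < t) :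
    ∃ k : ℕ, 2 ≤ k ∧ s * Real.log (2 * k) ≤ t * Real.log k := by
  set k : ℕ := max 2 ⌈Real.exp (s * Real.log 2 / (t - s))⌉₊ with hk
  have hk2 : 2 ≤ k := le_max_left _ _
  have hkpos : (0:ℝ) < k := by positivity
  have hek : Real.exp (s * Real.log 2 / (t - s)) ≤ k := by
    calc Real.exp _ ≤ (⌈Real.exp (s * Real.log 2 / (t - s))⌉₊ : ℝ) := Nat.le_ceil _
      _ ≤ k := by exact_mod_cast Nat.cast_le.mpr (le_max_right _ _)
  have hlogk : s * Real.log 2 / (t - s) ≤ Real.log k := by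
    rw [← Real.log_exp (s * Real.log 2 / (t - s))]
    exact Real.log_le_log (Real.exp_pos _) hek
  refine ⟨k, hk2, ?_⟩
  have hts : 0 < t - s := by linarith
  have hkey : s * Real.log 2 ≤ (t - s) * Real.log k := by
    rw [div_le_iff₀ hts] at hlogk
    linarith [hlogk]
  have hlog2k : Real.log (2 * k) = Real.log 2 + Real.log k := by
    rw [Real.log_mul (by norm_num) (by positivity)]
  nlinarith [hkey, hlog2k]

end Aux

/-- The distance of the regular ultrametric space `Y(k,q) = {1,…,k}^ℕ`:
`d(x,y) = q^{-n}` where `n ≥ 1` is the first (1-based) index where `x` and `y` differ. -/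
noncomputable def regDist (k : ℕ) (q : ℝ) (x y : ℕ → Fin k) : ℝ :=
  if x = y then 0 else q ^ (-((sInf {i : ℕ | x i ≠ y i} : ℕ) + 1 : ℤ))

/-- Theorem 1.7: any compact ultrametric space contains, for any `s < dimH X`, a co-Lipschitz
image of a regular ultrametric space `Y(k,q)` of Hausdorff dimension `log k / log q ≥ s`. -/
theorem exists_coLipschitz_regular_ultrametric
    {X : Type*} [MetricSpace X] [CompactSpace X]
    (hX : ∀ x y z : X, dist x z ≤ max (dist x y) (dist y z))
    (s : ℝ) (hs : 0 < s) (hsd : ENNReal.ofReal s < dimH (Set.univ : Set X)) :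
    ∃ (k : ℕ) (q : ℝ), 2 ≤ k ∧ 1 < q ∧ s ≤ Real.log k / Real.log q ∧
      ∃ (c : ℝ) (φ : (ℕ → Fin k) → X), 0 < c ∧
        ∀ a b : ℕ → Fin k, c * regDist k q a b ≤ dist (φ a) (φ b) := by
  haveI : IsUltrametricDist X := ⟨hX⟩
  borelize X
  -- choose the exponent t
  obtain ⟨m, hm1, hm2⟩ := exists_between hsd
  have hmtop : m ≠ ⊤ := hm2.ne_top
  set t : ℝ := m.toReal with htdef
  have hst : s < t := (ENNReal.ofReal_lt_iff_lt_toReal hs.le hmtop).mp hm1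
  have ht : 0 < t := hs.trans hst
  -- the Hausdorff measure at level t is infinite
  have hμH : μH[t] (Set.univ : Set X) = ∞ := by
    have hc : (m.toNNReal : ℝ≥0∞) < dimH (Set.univ : Set X) := by
      rwa [ENNReal.coe_toNNReal hmtop]
    have h := hausdorffMeasure_of_lt_dimH hc
    have : ((m.toNNReal : ℝ≥0) : ℝ) = t := rfl
    rwa [this] at h
  have h0 : hcont t ht (Set.univ : Set X) ≠ 0 := by
    intro h
    rw [hausdorffMeasure_eq_zero_of_hcont ht h] at hμH
    exact ENNReal.zero_ne_top hμH
  -- choose k and q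
  obtain ⟨k, hk2, hklog⟩ := choose_k hs hst
  have hkpos : (0:ℝ) < (k:ℝ) := by positivity
  set M : ℝ := ((2 * k : ℕ) : ℝ) with hMdef
  have hMeq : M = 2 * (k : ℝ) := by push_cast [hMdef]; ring
  have hM1 : 1 < M := by
    rw [hMeq]
    nlinarith [show (2:ℝ) ≤ (k:ℝ) from by exact_mod_cast hk2]
  have hM0 : 0 < M := lt_trans one_pos hM1
  set q : ℝ := M ^ (1/t) with hqdef
  have hq1 : 1 < q := by
    rw [hqdef, Real.one_lt_rpow_iff_of_pos hM0]
    exact Or.inl ⟨hM1, by positivity⟩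
  have hlogq : Real.log q = (1/t) * Real.log M := Real.log_rpow hM0 _
  refine ⟨k, q, hk2, hq1, ?_, ?_⟩
  · -- dimension bound
    rw [hlogq]
    have hlogM : 0 < Real.log M := Real.log_pos hM1
    rw [le_div_iff₀ (by positivity)]
    have : s * Real.log M ≤ t * Real.log k := by rw [hMeq]; exact hklog
    calc s * ((1/t) * Real.log M) = (s * Real.log M) / t := by ring
      _ ≤ (t * Real.log k) / t := by gcongr
      _ = Real.log k := by field_simp
  · -- the construction
    have h2k0 : ((2 * k : ℕ) : ℝ≥0∞) ≠ 0 := by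
      simp only [ne_eq, Nat.cast_eq_zero]; omega
    have h2ktop : ((2 * k : ℕ) : ℝ≥0∞) ≠ ⊤ := ENNReal.natCast_ne_top _
    set inv2k : ℝ≥0∞ := (((2 * k : ℕ) : ℝ≥0∞))⁻¹ with hinvdef
    have hinv0 : inv2k ≠ 0 := ENNReal.inv_ne_zero.mpr h2ktop
    -- children via choice
    set ch : Set X → Fin k → Set X := fun E i =>
      if hE : hcont t ht E ≠ 0 then (split_lemma ht hk2 E hE).choose i else ∅ with hchdef
    have hch : ∀ E, (hE : hcont t ht E ≠ 0) →
        (∀ i, ch E i ⊆ E) ∧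
        (∀ i, hcont t ht E / ((2 * k : ℕ) : ℝ≥0∞) ≤ hcont t ht (ch E i)) ∧
        (∀ i i', i ≠ i' → ∀ x ∈ ch E i, ∀ y ∈ ch E i',
          ((hcont t ht E / ((2 * k : ℕ) : ℝ≥0∞)) ^ (1/t)).toReal < dist x y) := by
      intro E hE
      have spec := (split_lemma ht hk2 E hE).choose_spec
      simp only [hchdef, dif_pos hE]
      exact spec
    set node : List (Fin k) → Set X := fun w => w.foldr (fun i E => ch E i) Set.univ
      with hnodedef
    have hnode_cons : ∀ (i : Fin k) (w : List (Fin k)), node (i :: w) = ch (node w) i :=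
      fun _ _ => rfl
    have hbound : ∀ w : List (Fin k),
        hcont t ht (Set.univ : Set X) * inv2k ^ w.length ≤ hcont t ht (node w) := by
      intro w
      induction w with
      | nil => simp [hnodedef]
      | cons i w ih =>
        have hne : hcont t ht (node w) ≠ 0 := by
          intro hzero
          rw [hzero] at ih
          have hz : hcont t ht (Set.univ : Set X) * inv2k ^ w.length = 0 :=
            le_antisymm ih zero_le
          exact (mul_ne_zero h0 (pow_ne_zero _ hinv0)) hz
        calc hcont t ht (Set.univ : Set X) * inv2k ^ (i :: w).length
            = (hcont t ht (Set.univ : Set X) * inv2k ^ w.length) * inv2k := by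
              simp only [List.length_cons]; ring
          _ ≤ hcont t ht (node w) * inv2k := mul_le_mul_of_nonneg_right ih zero_le
          _ = hcont t ht (node w) / ((2 * k : ℕ) : ℝ≥0∞) := (div_eq_mul_inv _ _).symm
          _ ≤ hcont t ht (ch (node w) i) := (hch _ hne).2.1 i
          _ = hcont t ht (node (i :: w)) := by rw [hnode_cons]
    have hnode0 : ∀ w : List (Fin k), hcont t ht (node w) ≠ 0 := by
      intro w hzero
      have := hbound w
      rw [hzero] at this
      exact (mul_ne_zero h0 (pow_ne_zero _ hinv0)) (le_antisymm this zero_le)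
    have hnodene : ∀ w : List (Fin k), (node w).Nonempty := by
      intro w
      rw [Set.nonempty_iff_ne_empty]
      intro hemp
      exact hnode0 w (by rw [hemp]; exact measure_empty)
    have hsub : ∀ (i : Fin k) (w : List (Fin k)), node (i :: w) ⊆ node w := by
      intro i w
      rw [hnode_cons]
      exact (hch _ (hnode0 w)).1 i
    -- word prefixes
    set wl : (ℕ → Fin k) → ℕ → List (Fin k) := fun a n => (List.range n).reverse.map a
      with hwldef
    have hwl_succ : ∀ (a : ℕ → Fin k) (n : ℕ), wl a (n+1) = a n :: wl a n := by
      intro a n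
      simp [hwldef, List.range_succ]
    have hwlen : ∀ (a : ℕ → Fin k) (n : ℕ), (wl a n).length = n := by
      intro a n
      simp [hwldef]
    -- nested closed sets
    set S : (ℕ → Fin k) → ℕ → Set X := fun a n => closure (node (wl a n)) with hSdef
    have hint : ∀ a : ℕ → Fin k, (⋂ n, S a n).Nonempty := by
      intro a
      refine IsCompact.nonempty_iInter_of_sequence_nonempty_isCompact_isClosed _
        (fun n => ?_) (fun n => (hnodene _).mono subset_closure)
        (isClosed_closure.isCompact) (fun n => isClosed_closure)
      show closure (node (wl a (n+1))) ⊆ closure (node (wl a n))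
      rw [hwl_succ]
      exact closure_mono (hsub _ _)
    choose φ hφ using hint
    set c : ℝ := ((hcont t ht (Set.univ : Set X)) ^ (1/t)).toReal with hcdef
    have hc : 0 < c := by
      refine ENNReal.toReal_pos ?_ ?_
      · exact (ENNReal.rpow_pos (pos_iff_ne_zero.mpr h0) (hcont_ne_top ht _)).ne'
      · exact (ENNReal.rpow_lt_top_of_nonneg (by positivity) (hcont_ne_top ht _)).ne
    refine ⟨c, φ, hc, ?_⟩
    intro a b
    by_cases hab : a = b
    · rw [regDist, if_pos hab, mul_zero]
      exact dist_nonneg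
    · rw [regDist, if_neg hab]
      set n : ℕ := sInf {i : ℕ | a i ≠ b i} with hndef
      have hne_set : {i : ℕ | a i ≠ b i}.Nonempty := Function.ne_iff.mp hab
      have hmem : a n ≠ b n := Nat.sInf_mem hne_set
      have hagree : ∀ i, i < n → a i = b i := fun i hi =>
        not_not.mp (Nat.notMem_of_lt_sInf hi)
      have hwleq : wl a n = wl b n := by
        simp only [hwldef]
        refine List.map_congr_left fun i hi => ?_
        rw [List.mem_reverse, List.mem_range] at hi
        exact hagree i hi
      set E := node (wl a n) with hEdef
      have hEne : hcont t ht E ≠ 0 := hnode0 (wl a n)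
      have hsep := (hch E hEne).2.2 (a n) (b n) hmem
      have hφa : φ a ∈ closure (ch E (a n)) := by
        have h1 := mem_iInter.mp (hφ a) (n + 1)
        rw [hSdef] at h1
        simp only at h1
        rwa [hwl_succ, hnode_cons, ← hEdef] at h1
      have hφb : φ b ∈ closure (ch E (b n)) := by
        have h1 := mem_iInter.mp (hφ b) (n + 1)
        rw [hSdef] at h1
        simp only at h1
        rwa [hwl_succ, hnode_cons, ← hwleq, ← hEdef] at h1
      set R : ℝ := ((hcont t ht E / ((2 * k : ℕ) : ℝ≥0∞)) ^ (1/t)).toReal with hRdef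
      have hRdist : R ≤ dist (φ a) (φ b) := by
        have hprod : (φ a, φ b) ∈ closure ((ch E (a n)) ×ˢ (ch E (b n))) := by
          rw [closure_prod_eq]
          exact ⟨hφa, hφb⟩
        have hclosed : IsClosed {p : X × X | R ≤ dist p.1 p.2} :=
          isClosed_le continuous_const continuous_dist
        have hsubset : (ch E (a n)) ×ˢ (ch E (b n)) ⊆ {p : X × X | R ≤ dist p.1 p.2} :=
          fun p hp => (hsep p.1 hp.1 p.2 hp.2).le
        exact closure_minimal hsubset hclosed hprod
      -- lower bound on R
      have hEb : hcont t ht (Set.univ : Set X) * inv2k ^ (n + 1)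
          ≤ hcont t ht E / ((2 * k : ℕ) : ℝ≥0∞) := by
        rw [div_eq_mul_inv]
        calc hcont t ht (Set.univ : Set X) * inv2k ^ (n + 1)
            = (hcont t ht (Set.univ : Set X) * inv2k ^ n) * inv2k := by ring
          _ ≤ hcont t ht E * inv2k := by
              refine mul_le_mul_of_nonneg_right ?_ zero_le
              have := hbound (wl a n)
              rwa [hwlen] at this
      have hfin : hcont t ht E / ((2 * k : ℕ) : ℝ≥0∞) ≠ ⊤ :=
        (ENNReal.div_lt_top (hcont_ne_top ht E) h2k0).ne
      have hRlow : ((hcont t ht (Set.univ : Set X) * inv2k ^ (n + 1)) ^ (1/t)).toReal ≤ R := by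
        refine ENNReal.toReal_mono ?_ (ENNReal.rpow_le_rpow hEb (by positivity))
        exact (ENNReal.rpow_lt_top_of_nonneg (by positivity) hfin).ne
      -- compute the lower bound
      have hcalc : ((hcont t ht (Set.univ : Set X) * inv2k ^ (n + 1)) ^ (1/t)).toReal
          = c * q ^ (-((n : ℤ) + 1)) := by
        rw [ENNReal.mul_rpow_of_nonneg _ _ (by positivity : (0:ℝ) ≤ 1/t),
          ENNReal.toReal_mul, ← hcdef]
        congr 1
        rw [← ENNReal.toReal_rpow]
        have h1 : ((inv2k ^ (n + 1)).toReal) = ((M⁻¹ : ℝ) ^ (n + 1)) := by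
          rw [ENNReal.toReal_pow, hinvdef, ENNReal.toReal_inv, ENNReal.toReal_natCast, hMdef]
        rw [h1, hqdef]
        exact aux_pow hM0 ht n
      have hdist1 : (1:ℝ)/t = 1/t := rfl
      calc c * q ^ (-((n : ℤ) + 1)) = ((hcont t ht (Set.univ : Set X)
            * inv2k ^ (n + 1)) ^ (1/t)).toReal := hcalc.symm
        _ ≤ R := hRlow
        _ ≤ dist (φ a) (φ b) := hRdist
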